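/- Let g_upper, g_lower : 𝒳 → ℝ with g_lower(x) ≤ g_upper(x), let X be a random variable taking values in a finite set 𝒳, and let Y_k, Y_ℓ be rewards such that conditionally on X = x, g_lower_k(x) ≤ Y_k ≤ g_upper_k(x) and Y_ℓ ≤ g_upper_ℓ(x) almost surely. Define s(r) = max{ g_upper_ℓ(x) : x ∈ 𝒳, g_lower_k(x) ≤ r ≤ g_upper_k(x) }. Then for every r with P(Y_k = r) > 0, E[Y_ℓ | Y_k = r] ≤ s(r). -/

import Mathlib

open MeasureTheory

/-- Validity of the latent-source pseudo-reward construction: if conditionally on the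
latent variable `X = x` the rewards satisfy `glk x ≤ Yk ≤ guk x` and `Yl ≤ gul x`, then
for every `r` with `P(Yk = r) > 0`, the conditional mean of `Yl` given `Yk = r` is at
most `s r = sup { gul x : glk x ≤ r ≤ guk x }`. -/
theorem stmt_17 {Ω 𝒳 : Type*} [MeasurableSpace Ω] [Fintype 𝒳]
    (μ : Measure Ω) [IsProbabilityMeasure μ]
    (X : Ω → 𝒳) (Yk Yl : Ω → ℝ) (hYk : Measurable Yk) (hYl : Integrable Yl μ)
    (glk guk gul : 𝒳 → ℝ)
    (hbk : ∀ᵐ ω ∂μ, glk (X ω) ≤ Yk ω ∧ Yk ω ≤ guk (X ω))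
    (hbl : ∀ᵐ ω ∂μ, Yl ω ≤ gul (X ω))
    (s : ℝ → ℝ)
    (hs : ∀ r, s r = sSup (gul '' {x : 𝒳 | glk x ≤ r ∧ r ≤ guk x})) :
    ∀ r : ℝ, 0 < μ {ω | Yk ω = r} →
      (∫ ω in {ω | Yk ω = r}, Yl ω ∂μ) / (μ {ω | Yk ω = r}).toReal ≤ s r := by
  intro r hr
  set A : Set Ω := {ω | Yk ω = r} with hA
  have hAm : MeasurableSet A := hYk (measurableSet_singleton r)
  have hAlt : μ A < ⊤ := lt_of_le_of_lt (measure_mono (Set.subset_univ _))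
    (by simp [measure_univ])
  have hpos : 0 < (μ A).toReal := ENNReal.toReal_pos hr.ne' hAlt.ne
  have hbdd : BddAbove (gul '' {x : 𝒳 | glk x ≤ r ∧ r ≤ guk x}) :=
    (Set.toFinite _).bddAbove
  have hae : ∀ᵐ ω ∂(μ.restrict A), Yl ω ≤ s r := by
    have hmem : ∀ᵐ ω ∂(μ.restrict A), ω ∈ A := ae_restrict_mem hAm
    filter_upwards [hmem, ae_restrict_of_ae hbk, ae_restrict_of_ae hbl]
      with ω hωA hωk hωl
    have hr' : Yk ω = r := hωA
    rw [hr'] at hωk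
    have hx : gul (X ω) ∈ gul '' {x : 𝒳 | glk x ≤ r ∧ r ≤ guk x} :=
      ⟨X ω, ⟨hωk.1, hωk.2⟩, rfl⟩
    exact hωl.trans ((le_csSup hbdd hx).trans_eq (hs r).symm)
  have hint : (∫ ω in A, Yl ω ∂μ) ≤ ∫ _ω in A, s r ∂μ :=
    integral_mono_ae hYl.restrict (integrable_const _) hae
  have hconst : (∫ _ω in A, s r ∂μ) = (μ A).toReal * s r := by
    simp [integral_const, smul_eq_mul, Measure.real]
  rw [div_le_iff₀ hpos]
  calc (∫ ω in A, Yl ω ∂μ) ≤ (μ A).toReal * s r := hint.trans_eq hconst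
    _ = s r * (μ A).toReal := mul_comm _ _
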